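/- Let N = {1,…,n}, S ⊆ N with s := |S|, ν : 2^N → ℝ a game, p_t^s(n) interaction weights, and let T_1,…,T_m be i.i.d. random coalitions drawn from a probability distribution P on 2^N with P(T) > 0 for all T ⊆ N. Then the MSR estimator φ̂_S := (1/m) ∑_{i=1}^m ν(T_i) · (−1)^{s−|S∩T_i|} · p^s_{|T_i|−|S∩T_i|}(n) / P(T_i) has variance Var[φ̂_S] = (1/m) · ( ∑_{T ⊆ N} ν(T)² · (p^s_{|T|−|S∩T|}(n))² / P(T) − φ_S(ν)² ), where φ_S(ν) := ∑_{T ⊆ N\S} p_{|T|}^{s}(n) Δ_S ν(T). In particular, Var[φ̂_S] ≤ (‖ν‖_∞² / m) · Γ_S(P), where Γ_S(P) := ∑_{T ⊆ N} (p^s_{|T|−|S∩T|}(n))² / P(T) and ‖ν‖_∞ := max_{T ⊆ N} |ν(T)|. -/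

import Mathlib

open Finset

/-- Expectation of a function of `m` i.i.d. coalitions drawn from the distribution `P`
on `2^N` (players modeled as `Fin n`): the joint sample space is `Fin m → Finset (Fin n)`
with product weights. -/
noncomputable def expec {n m : ℕ} (P : Finset (Fin n) → ℝ)
    (f : (Fin m → Finset (Fin n)) → ℝ) : ℝ :=
  ∑ ω : Fin m → Finset (Fin n), (∏ i, P (ω i)) * f ω

/-- Variance of a function of `m` i.i.d. coalitions drawn from `P`. -/
noncomputable def varFin {n m : ℕ} (P : Finset (Fin n) → ℝ)
    (f : (Fin m → Finset (Fin n)) → ℝ) : ℝ :=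
  expec P fun ω => (f ω - expec P f) ^ 2

/-- Discrete derivative `Δ_S ν(T) = ∑_{L ⊆ S} (−1)^{|S|−|L|} ν(T ∪ L)`. -/
noncomputable def discDeriv {n : ℕ} (ν : Finset (Fin n) → ℝ) (S T : Finset (Fin n)) : ℝ :=
  ∑ L ∈ S.powerset, (-1 : ℝ) ^ (S.card - L.card) * ν (T ∪ L)

/-- Cardinal-probabilistic interaction index
`φ_S(ν) = ∑_{T ⊆ N\S} p_{|T|}^{|S|} Δ_S ν(T)` with interaction weights `p t s`. -/
noncomputable def interIdx {n : ℕ} (p : ℕ → ℕ → ℝ) (ν : Finset (Fin n) → ℝ)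
    (S : Finset (Fin n)) : ℝ :=
  ∑ T ∈ (univ \ S).powerset, p T.card S.card * discDeriv ν S T

/-- The MSR estimator
`φ̂_S(ω) = (1/m) ∑_i ν(T_i) (−1)^{s−|S∩T_i|} p^s_{|T_i|−|S∩T_i|} / P(T_i)`. -/
noncomputable def msr {n : ℕ} (m : ℕ) (ν : Finset (Fin n) → ℝ) (p : ℕ → ℕ → ℝ)
    (S : Finset (Fin n)) (P : Finset (Fin n) → ℝ)
    (ω : Fin m → Finset (Fin n)) : ℝ :=
  (1 / (m : ℝ)) * ∑ i, ν (ω i) * (-1 : ℝ) ^ (S.card - (S ∩ ω i).card)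
      * p ((ω i).card - (S ∩ ω i).card) S.card / P (ω i)

/-- Sup norm `‖ν‖_∞ = max_{T ⊆ N} |ν(T)|`. -/
noncomputable def supNorm {n : ℕ} (ν : Finset (Fin n) → ℝ) : ℝ :=
  Finset.univ.sup' ⟨∅, Finset.mem_univ ∅⟩ fun T => |ν T|

/- ### Auxiliary lemmas -/

lemma expec_prod_sum {α : Type*} [Fintype α] [DecidableEq α] {m : ℕ} (F : Fin m → α → ℝ) :
    ∑ ω : Fin m → α, ∏ k, F k (ω k) = ∏ k, ∑ a, F k a := by
  rw [Finset.prod_univ_sum, Fintype.piFinset_univ]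

lemma expec_sel {α : Type*} [Fintype α] [DecidableEq α] {m : ℕ} (P h : α → ℝ)
    (hP : ∑ a, P a = 1) (s : Finset (Fin m)) :
    ∑ ω : Fin m → α, (∏ k, P (ω k)) * ∏ k ∈ s, h (ω k) = (∑ a, P a * h a) ^ s.card := by
  have key : ∀ ω : Fin m → α,
      (∏ k, P (ω k)) * ∏ k ∈ s, h (ω k)
        = ∏ k, (P (ω k) * if k ∈ s then h (ω k) else 1) := by
    intro ω
    rw [Finset.prod_mul_distrib]
    congr 1
    rw [Finset.prod_ite_mem, Finset.univ_inter]
  simp_rw [key]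
  rw [expec_prod_sum (fun k a => P a * if k ∈ s then h a else 1)]
  have : ∀ k : Fin m, (∑ a, P a * if k ∈ s then h a else 1)
      = if k ∈ s then ∑ a, P a * h a else 1 := by
    intro k
    split_ifs with hk <;> simp [hP]
  simp_rw [this]
  rw [Finset.prod_ite_mem, Finset.univ_inter, Finset.prod_const]

lemma mean_eq {n : ℕ} (S : Finset (Fin n)) (ν : Finset (Fin n) → ℝ) (p : ℕ → ℕ → ℝ) :
    ∑ A : Finset (Fin n),
      ν A * (-1 : ℝ) ^ (S.card - (S ∩ A).card) * p (A.card - (S ∩ A).card) S.card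
    = interIdx p ν S := by
  unfold interIdx discDeriv
  simp_rw [Finset.mul_sum]
  rw [← Finset.sum_product']
  symm
  refine Finset.sum_nbij' (i := fun q => q.1 ∪ q.2) (j := fun A => (A \ S, A ∩ S)) ?_ ?_ ?_ ?_ ?_
  · intro q _; exact Finset.mem_univ _
  · intro A _
    simp only [Finset.mem_product, Finset.mem_powerset]
    exact ⟨fun x hx => by simp [Finset.mem_sdiff.1 hx |>.2], Finset.inter_subset_right⟩
  · rintro ⟨T, L⟩ hq
    simp only [Finset.mem_product, Finset.mem_powerset] at hq
    obtain ⟨hT, hL⟩ := hq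
    have hTS : Disjoint T S := by
      rw [Finset.disjoint_left]; intro x hx hxS
      have := hT hx; simp [Finset.mem_sdiff] at this; exact this hxS
    have h1 : (T ∪ L) \ S = T := by
      rw [Finset.union_sdiff_distrib, Finset.sdiff_eq_self_of_disjoint hTS,
        Finset.sdiff_eq_empty_iff_subset.2 hL, Finset.union_empty]
    have h2 : (T ∪ L) ∩ S = L := by
      rw [Finset.union_inter_distrib_right, (Finset.disjoint_iff_inter_eq_empty).1 hTS,
        Finset.empty_union, Finset.inter_eq_left.2 hL]
    simp [h1, h2]
  · intro A _; exact Finset.sdiff_union_inter A S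
  · rintro ⟨T, L⟩ hq
    simp only [Finset.mem_product, Finset.mem_powerset] at hq
    obtain ⟨hT, hL⟩ := hq
    have hTS : Disjoint T S := by
      rw [Finset.disjoint_left]; intro x hx hxS
      have := hT hx; simp [Finset.mem_sdiff] at this; exact this hxS
    have h2 : S ∩ (T ∪ L) = L := by
      rw [Finset.inter_union_distrib_left, (Finset.disjoint_iff_inter_eq_empty).1 hTS.symm,
        Finset.empty_union, Finset.inter_eq_right.2 hL]
    have hdisj : Disjoint T L := hTS.mono_right hL
    have hcard : (T ∪ L).card = T.card + L.card := Finset.card_union_of_disjoint hdisj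
    simp only [h2, hcard]
    rw [Nat.add_sub_cancel]
    ring

lemma var_eq_moments {n m : ℕ} (P : Finset (Fin n) → ℝ)
    (hmass : ∑ ω : Fin m → Finset (Fin n), ∏ k, P (ω k) = 1)
    (f : (Fin m → Finset (Fin n)) → ℝ) :
    varFin P f = expec P (fun ω => f ω * f ω) - expec P f * expec P f := by
  unfold varFin
  set E := expec P f with hEdef
  have hE : (∑ ω : Fin m → Finset (Fin n), (∏ k, P (ω k)) * f ω) = E := rfl
  unfold expec
  have key : ∀ ω : Fin m → Finset (Fin n),
      (∏ k, P (ω k)) * (f ω - E) ^ 2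
        = (∏ k, P (ω k)) * (f ω * f ω)
          - 2 * E * ((∏ k, P (ω k)) * f ω)
          + E * E * (∏ k, P (ω k)) := by
    intro ω; ring
  simp_rw [key]
  rw [Finset.sum_add_distrib, Finset.sum_sub_distrib, ← Finset.mul_sum, ← Finset.mul_sum, hmass,
    hE]
  ring

theorem msr_variance_identity {n m : ℕ} (hm : 0 < m)
    (S : Finset (Fin n)) (ν : Finset (Fin n) → ℝ) (p : ℕ → ℕ → ℝ)
    (P : Finset (Fin n) → ℝ) (hPpos : ∀ T, 0 < P T)
    (hPsum : ∑ T : Finset (Fin n), P T = 1) :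
    varFin P (msr m ν p S P)
        = (1 / (m : ℝ)) *
            ((∑ T : Finset (Fin n),
                ν T ^ 2 * (p (T.card - (S ∩ T).card) S.card) ^ 2 / P T)
              - interIdx p ν S ^ 2)
      ∧ varFin P (msr m ν p S P)
        ≤ (supNorm ν ^ 2 / (m : ℝ)) *
            ∑ T : Finset (Fin n), (p (T.card - (S ∩ T).card) S.card) ^ 2 / P T := by
  have hm0 : (m : ℝ) ≠ 0 := Nat.cast_ne_zero.2 hm.ne'
  set g : Finset (Fin n) → ℝ := fun T =>
    ν T * (-1 : ℝ) ^ (S.card - (S ∩ T).card) * p (T.card - (S ∩ T).card) S.card / P T with hg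
  set μ : ℝ := ∑ a : Finset (Fin n), P a * g a with hμdef
  set Q : ℝ := ∑ a : Finset (Fin n), P a * (g a * g a) with hQdef
  have hmsr : msr m ν p S P = fun ω => (1 / (m : ℝ)) * ∑ i, g (ω i) := rfl
  have hmass : ∑ ω : Fin m → Finset (Fin n), ∏ k, P (ω k) = 1 := by
    have := expec_prod_sum (m := m) (fun _ a => P a)
    simpa [hPsum] using this
  -- first moment
  have h1 : ∀ i : Fin m,
      (∑ ω : Fin m → Finset (Fin n), (∏ k, P (ω k)) * g (ω i)) = μ := by
    intro i
    have := expec_sel P g hPsum {i}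
    simpa using this
  have hmean : expec P (msr m ν p S P) = μ := by
    rw [hmsr]
    unfold expec
    have key : ∀ ω : Fin m → Finset (Fin n),
        (∏ k, P (ω k)) * ((1 / (m : ℝ)) * ∑ i, g (ω i))
          = (1 / (m : ℝ)) * ∑ i, (∏ k, P (ω k)) * g (ω i) := by
      intro ω; rw [mul_left_comm, Finset.mul_sum]
    simp_rw [key]
    rw [← Finset.mul_sum, Finset.sum_comm]
    simp_rw [h1]
    rw [Finset.sum_const, Finset.card_univ, Fintype.card_fin]
    field_simp
    rw [nsmul_eq_mul]
  -- second moment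
  have hij : ∀ i j : Fin m,
      (∑ ω : Fin m → Finset (Fin n), (∏ k, P (ω k)) * (g (ω i) * g (ω j)))
        = if i = j then Q else μ * μ := by
    intro i j
    by_cases h : i = j
    · subst h
      have := expec_sel P (fun a => g a * g a) hPsum {i}
      simpa using this
    · have := expec_sel P g hPsum {i, j}
      simp only [Finset.prod_pair h, Finset.card_pair h] at this
      simpa [h, sq] using this
  have hsecond : expec P (fun ω => msr m ν p S P ω * msr m ν p S P ω)
      = (1 / (m : ℝ))^2 * ((m : ℝ) * Q + (m : ℝ) * ((m : ℝ) - 1) * (μ * μ)) := by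
    rw [hmsr]
    unfold expec
    have key : ∀ ω : Fin m → Finset (Fin n),
        (∏ k, P (ω k)) *
            (((1 / (m : ℝ)) * ∑ i, g (ω i)) * ((1 / (m : ℝ)) * ∑ j, g (ω j)))
          = (1 / (m : ℝ))^2 * ∑ i, ∑ j, (∏ k, P (ω k)) * (g (ω i) * g (ω j)) := by
      intro ω
      calc (∏ k, P (ω k)) *
            (((1 / (m : ℝ)) * ∑ i, g (ω i)) * ((1 / (m : ℝ)) * ∑ j, g (ω j)))
          = (1 / (m : ℝ))^2 * ((∏ k, P (ω k)) * ((∑ i, g (ω i)) * ∑ j, g (ω j))) := by ring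
        _ = (1 / (m : ℝ))^2 * ((∏ k, P (ω k)) * ∑ i, ∑ j, g (ω i) * g (ω j)) := by
            rw [Finset.sum_mul_sum]
        _ = (1 / (m : ℝ))^2 * ∑ i, ∑ j, (∏ k, P (ω k)) * (g (ω i) * g (ω j)) := by
            simp_rw [Finset.mul_sum]
    simp_rw [key]
    rw [← Finset.mul_sum]
    congr 1
    rw [Finset.sum_comm]
    have : ∀ i : Fin m,
        (∑ ω : Fin m → Finset (Fin n), ∑ j, (∏ k, P (ω k)) * (g (ω i) * g (ω j)))
          = Q + ((m : ℝ) - 1) * (μ * μ) := by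
      intro i
      rw [Finset.sum_comm]
      simp_rw [hij]
      have split : ∀ j : Fin m, (if i = j then Q else μ * μ)
          = (if i = j then Q - μ * μ else 0) + μ * μ := by
        intro j; split_ifs <;> ring
      simp_rw [split]
      rw [Finset.sum_add_distrib, Finset.sum_ite_eq, Finset.sum_const, Finset.card_univ,
        Fintype.card_fin]
      simp [nsmul_eq_mul]
      ring
    simp_rw [this]
    rw [Finset.sum_const, Finset.card_univ, Fintype.card_fin, nsmul_eq_mul]
    ring
  -- variance formula in terms of Q and μ
  have hvar : varFin P (msr m ν p S P) = (1 / (m : ℝ)) * (Q - μ * μ) := by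
    rw [var_eq_moments P hmass, hsecond, hmean]
    field_simp
    ring
  -- identify Q and μ
  have hQ : Q = ∑ T : Finset (Fin n),
      ν T ^ 2 * (p (T.card - (S ∩ T).card) S.card) ^ 2 / P T := by
    rw [hQdef]
    apply Finset.sum_congr rfl
    intro T _
    have hP := (hPpos T).ne'
    rw [hg]
    have hs : ((-1 : ℝ) ^ (S.card - (S ∩ T).card)) ^ 2 = 1 := by
      rw [← pow_mul, mul_comm, pow_mul]; norm_num
    field_simp
    ring_nf
    simp only [pow_mul, hs]
    ring
  have hμ : μ = interIdx p ν S := by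
    rw [hμdef, ← mean_eq S ν p]
    apply Finset.sum_congr rfl
    intro T _
    rw [hg]
    field_simp [(hPpos T).ne']
  constructor
  · rw [hvar, hQ, hμ, ← pow_two]
  · rw [hvar]
    have hQle : Q ≤ supNorm ν ^ 2 *
        ∑ T : Finset (Fin n), (p (T.card - (S ∩ T).card) S.card) ^ 2 / P T := by
      rw [hQ, Finset.mul_sum]
      apply Finset.sum_le_sum
      intro T _
      have h1 : ν T ^ 2 ≤ supNorm ν ^ 2 := by
        have habs : |ν T| ≤ supNorm ν :=
          Finset.le_sup' (fun T => |ν T|) (Finset.mem_univ T)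
        calc ν T ^ 2 = |ν T| ^ 2 := (sq_abs _).symm
          _ ≤ supNorm ν ^ 2 := pow_le_pow_left₀ (abs_nonneg _) habs 2
      rw [mul_div_assoc]
      exact mul_le_mul_of_nonneg_right h1 (div_nonneg (sq_nonneg _) (hPpos T).le)
    calc (1 / (m : ℝ)) * (Q - μ * μ) ≤ (1 / (m : ℝ)) * Q := by
          apply mul_le_mul_of_nonneg_left _ (by positivity)
          nlinarith [mul_self_nonneg μ]
      _ ≤ (1 / (m : ℝ)) * (supNorm ν ^ 2 *
            ∑ T : Finset (Fin n), (p (T.card - (S ∩ T).card) S.card) ^ 2 / P T) := by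
          apply mul_le_mul_of_nonneg_left hQle (by positivity)
      _ = (supNorm ν ^ 2 / (m : ℝ)) *
            ∑ T : Finset (Fin n), (p (T.card - (S ∩ T).card) S.card) ^ 2 / P T := by
          ring
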